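/- For every odd integer M ≥ 5: 2^M / ( 2·M·C(M−1, (M−1)/2) ) < √(2π)·(M−1)^{3/2} / ( 2·(M² − 3M) ), where C(n,k) denotes the binomial coefficient. -/

import Mathlib

set_option maxHeartbeats 1000000

open Stirling Real Filter Finset Nat

/-- The Stirling sequence is bounded below by `√π`. -/
lemma aux_sqrtpi_le (n : ℕ) : Real.sqrt Real.pi ≤ stirlingSeq (n + 1) := by
  have h2 : Tendsto (stirlingSeq ∘ Nat.succ) atTop (nhds (Real.sqrt Real.pi)) :=
    Stirling.tendsto_stirlingSeq_sqrt_pi.comp (tendsto_add_atTop_nat 1)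
  exact Stirling.stirlingSeq'_antitone.le_of_tendsto h2 n

/-- Quantitative upper bound for `log (stirlingSeq (k+2))`. -/
lemma aux_log_upper (k : ℕ) :
    Real.log (stirlingSeq (k + 2)) ≤ Real.log (Real.sqrt Real.pi) + 1 / (4 * ((k : ℝ) + 1)) := by
  set c : ℝ := 1 / (4 * ((k : ℝ) + 1)) with hc
  have hk0 : (0 : ℝ) ≤ (k : ℝ) := Nat.cast_nonneg k
  have key : ∀ j, Real.log (stirlingSeq (k + 2)) - Real.log (stirlingSeq (k + 2 + j)) ≤ c := by
    intro j
    have tel : Real.log (stirlingSeq (k + 2)) - Real.log (stirlingSeq (k + 2 + j)) =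
        ∑ i ∈ Finset.range j,
          (Real.log (stirlingSeq (k + 2 + i)) - Real.log (stirlingSeq (k + 2 + (i + 1)))) := by
      rw [Finset.sum_range_sub' (fun i => Real.log (stirlingSeq (k + 2 + i)))]
    rw [tel]
    set f : ℕ → ℝ := fun i => 1 / (4 * ((k : ℝ) + 1 + i)) with hf
    have hterm : ∀ i, Real.log (stirlingSeq (k + 2 + i)) - Real.log (stirlingSeq (k + 2 + (i + 1)))
        ≤ f i - f (i + 1) := by
      intro i
      have h1 := Stirling.log_stirlingSeq_sub_log_stirlingSeq_succ (k + i + 1 + 1)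
      have e1 : k + i + 1 + 1 = k + 2 + i := by omega
      have e2 : k + 2 + i + 1 = k + 2 + (i + 1) := by omega
      rw [e1, e2] at h1
      have hcast : ((k + 2 + i : ℕ) : ℝ) = (k : ℝ) + 2 + i := by push_cast; ring
      rw [hcast] at h1
      refine h1.trans ?_
      have hi0 : (0 : ℝ) ≤ (i : ℝ) := Nat.cast_nonneg i
      have heq : f i - f (i + 1) =
          1 / (4 * (((k : ℝ) + 1 + i) * ((k : ℝ) + 2 + i))) := by
        rw [hf]
        push_cast
        rw [div_sub_div _ _ (by positivity) (by positivity),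
          div_eq_div_iff (by positivity) (by positivity)]
        ring
      rw [heq]
      refine one_div_le_one_div_of_le (by positivity) ?_
      have hAB : ((k : ℝ) + 1 + i) * ((k : ℝ) + 2 + i) ≤ ((k : ℝ) + 2 + i) ^ 2 := by
        rw [sq]
        apply mul_le_mul_of_nonneg_right (by linarith) (by linarith)
      linarith
    calc ∑ i ∈ Finset.range j,
          (Real.log (stirlingSeq (k + 2 + i)) - Real.log (stirlingSeq (k + 2 + (i + 1))))
        ≤ ∑ i ∈ Finset.range j, (f i - f (i + 1)) :=
          Finset.sum_le_sum fun i _ => hterm i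
      _ = f 0 - f j := Finset.sum_range_sub' f j
      _ ≤ f 0 := by
          have hj0 : (0 : ℝ) ≤ (j : ℝ) := Nat.cast_nonneg j
          have h1 : 0 < 4 * ((k : ℝ) + 1 + j) := by positivity
          have h2 : 0 ≤ f j := by rw [hf]; positivity
          linarith
      _ = c := by rw [hf, hc]; norm_num
  have hcomp : Tendsto (fun j : ℕ => stirlingSeq (k + 2 + j)) atTop (nhds (Real.sqrt Real.pi)) := by
    have := Stirling.tendsto_stirlingSeq_sqrt_pi.comp (tendsto_add_atTop_nat (k + 2))
    refine this.congr fun n => by simp [Function.comp, Nat.add_comm]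
  have hsp : (0 : ℝ) < Real.sqrt Real.pi := Real.sqrt_pos.mpr Real.pi_pos
  have hlog : Tendsto (fun j : ℕ => Real.log (stirlingSeq (k + 2 + j)) + c) atTop
      (nhds (Real.log (Real.sqrt Real.pi) + c)) :=
    (((Real.continuousAt_log hsp.ne').tendsto).comp hcomp).add_const c
  exact ge_of_tendsto hlog (Filter.Eventually.of_forall fun j => by linarith [key j])

/-- For every odd integer `M ≥ 5`:
`2^M / (2 M C(M-1,(M-1)/2)) < √(2π) (M-1)^{3/2} / (2(M² - 3M))`. -/
theorem stmt_13 (M : ℕ) (hModd : Odd M) (hM : 5 ≤ M) :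
    (2 : ℝ) ^ M / (2 * M * ((M - 1).choose ((M - 1) / 2) : ℝ)) <
      Real.sqrt (2 * Real.pi) * ((M : ℝ) - 1) ^ ((3 : ℝ) / 2) /
        (2 * ((M : ℝ) ^ 2 - 3 * M)) := by
  obtain ⟨l, rfl⟩ := hModd
  have hl : 2 ≤ l := by omega
  set x : ℝ := (l : ℝ) with hxdef
  have hx : (2 : ℝ) ≤ x := by rw [hxdef]; exact_mod_cast hl
  have hx0 : (0 : ℝ) < x := by linarith
  -- rewrite the binomial coefficient
  have e1 : 2 * l + 1 - 1 = 2 * l := by omega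
  have e2 : (2 * l + 1 - 1) / 2 = l := by omega
  rw [e1, show 2 * l / 2 = l from by omega]
  set s1 : ℝ := stirlingSeq l with hs1def
  set s2 : ℝ := stirlingSeq (2 * l) with hs2def
  have hs1pos : 0 < s1 := by
    have := Stirling.stirlingSeq'_pos (l - 1)
    rwa [Nat.sub_add_cancel (by omega)] at this
  have hs2 : Real.sqrt Real.pi ≤ s2 := by
    have := aux_sqrtpi_le (2 * l - 1)
    rwa [Nat.sub_add_cancel (by omega)] at this
  have hsp : (0 : ℝ) < Real.sqrt Real.pi := Real.sqrt_pos.mpr Real.pi_pos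
  have hs2pos : 0 < s2 := lt_of_lt_of_le hsp hs2
  -- upper bound on s1²
  have hlog : Real.log s1 ≤ Real.log (Real.sqrt Real.pi) + 1 / (4 * (x - 1)) := by
    have h := aux_log_upper (l - 2)
    have e3 : l - 2 + 2 = l := by omega
    have e4 : ((l - 2 : ℕ) : ℝ) + 1 = x - 1 := by
      rw [Nat.cast_sub hl]; push_cast; ring
    rwa [e3, e4] at h
  have hs1le : s1 ≤ Real.sqrt Real.pi * Real.exp (1 / (4 * (x - 1))) := by
    have h := Real.exp_le_exp.mpr hlog
    rwa [Real.exp_add, Real.exp_log hs1pos, Real.exp_log hsp] at h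
  have hs1sq : s1 ^ 2 < Real.pi * x / (x - 1) := by
    have h1 : s1 ^ 2 ≤ Real.pi * Real.exp (1 / (2 * (x - 1))) := by
      calc s1 ^ 2 ≤ (Real.sqrt Real.pi * Real.exp (1 / (4 * (x - 1)))) ^ 2 := by
            apply pow_le_pow_left₀ hs1pos.le hs1le
        _ = Real.pi * Real.exp (1 / (2 * (x - 1))) := by
            have hx1 : x - 1 ≠ 0 := by intro h; linarith
            rw [mul_pow, Real.sq_sqrt Real.pi_pos.le, sq, ← Real.exp_add]
            congr 2
            field_simp
            ring
    have hexp : Real.exp (1 / (2 * (x - 1))) < x / (x - 1) := by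
      set t : ℝ := 1 / (2 * (x - 1)) with htdef
      have hx1 : (1 : ℝ) ≤ x - 1 := by linarith
      have ht0 : 0 < t := by positivity
      have ht : t ≤ 1 / 2 := by
        rw [htdef, div_le_div_iff₀ (by linarith) (by norm_num)]
        linarith
      have h3 : 1 - t < Real.exp (-t) := by
        have := Real.add_one_lt_exp (x := -t) (by linarith)
        linarith
      have h4 : Real.exp t < 1 / (1 - t) := by
        rw [lt_div_iff₀ (by linarith)]
        have h5 := mul_lt_mul_of_pos_left h3 (Real.exp_pos t)
        rwa [← Real.exp_add, add_neg_cancel, Real.exp_zero] at h5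
      have h6 : 1 / (1 - t) ≤ 1 + 2 * t := by
        rw [div_le_iff₀ (by linarith)]
        have hprod : 0 ≤ t * (1 / 2 - t) := mul_nonneg ht0.le (by linarith)
        nlinarith [hprod]
      have h7 : 1 + 2 * t = x / (x - 1) := by
        rw [htdef]
        field_simp
        ring
      linarith
    calc s1 ^ 2 ≤ Real.pi * Real.exp (1 / (2 * (x - 1))) := h1
      _ < Real.pi * (x / (x - 1)) := by
          exact mul_lt_mul_of_pos_left hexp Real.pi_pos
      _ = Real.pi * x / (x - 1) := by ring
  -- factorial identities
  have hfact : ∀ n : ℕ, 0 < n →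
      (n ! : ℝ) = stirlingSeq n * (Real.sqrt (2 * n) * ((n : ℝ) / Real.exp 1) ^ n) := by
    intro n hn
    rw [Stirling.stirlingSeq, div_mul_cancel₀]
    have hn' : (0 : ℝ) < n := by exact_mod_cast hn
    positivity
  have hCnat : (2 * l).choose l * l ! * l ! = (2 * l)! := by
    have h := Nat.choose_mul_factorial_mul_factorial (show l ≤ 2 * l by omega)
    simpa [show 2 * l - l = l from by omega] using h
  set C : ℝ := ((2 * l).choose l : ℝ) with hCdef
  have hCpos : (0 : ℝ) < C := by
    rw [hCdef]
    exact_mod_cast Nat.choose_pos (show l ≤ 2 * l by omega)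
  have hCfac : C * (l ! : ℝ) * (l ! : ℝ) = ((2 * l)! : ℝ) := by
    rw [hCdef]; exact_mod_cast congrArg (fun n : ℕ => (n : ℝ)) hCnat
  set P : ℝ := (x / Real.exp 1) ^ l with hPdef
  have hPpos : 0 < P := by rw [hPdef]; positivity
  have hf1 : (l ! : ℝ) = s1 * (Real.sqrt (2 * x) * P) := hfact l (by omega)
  have hf2 : ((2 * l)! : ℝ) = s2 * (Real.sqrt (2 * (2 * x)) * ((2 * x) / Real.exp 1) ^ (2 * l)) := by
    have := hfact (2 * l) (by omega)
    rwa [show ((2 * l : ℕ) : ℝ) = 2 * x by push_cast; ring] at this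
  set b : ℝ := Real.sqrt x with hbdef
  have hb2 : b ^ 2 = x := Real.sq_sqrt hx0.le
  have hbpos : 0 < b := Real.sqrt_pos.mpr hx0
  have hsq2x : Real.sqrt (2 * x) ^ 2 = 2 * x := Real.sq_sqrt (by linarith)
  have hsq4x : Real.sqrt (2 * (2 * x)) = 2 * b := by
    rw [show 2 * (2 * x) = 2 ^ 2 * x by ring, Real.sqrt_mul (by norm_num), hbdef,
      Real.sqrt_sq (by norm_num : (0:ℝ) ≤ 2)]
  have hpow : ((2 * x) / Real.exp 1) ^ (2 * l) = 4 ^ l * P ^ 2 := by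
    have hsq : ((2 * x) / Real.exp 1) ^ 2 = 4 * (x / Real.exp 1) ^ 2 := by
      field_simp
      ring
    rw [pow_mul, hsq, mul_pow, hPdef, ← pow_mul, ← pow_mul, Nat.mul_comm l 2]
  set F : ℝ := (4 : ℝ) ^ l with hFdef
  have hFpos : 0 < F := by rw [hFdef]; positivity
  -- key algebraic identity
  have key : C * s1 ^ 2 * x = s2 * b * F := by
    have h := hCfac
    rw [hf1, hf2, hsq4x, hpow] at h
    have h2 : (C * s1 ^ 2 * x) * (2 * P ^ 2) = (s2 * b * F) * (2 * P ^ 2) := by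
      linear_combination h - C * s1 ^ 2 * P ^ 2 * hsq2x
    have hP2 : (0 : ℝ) < 2 * P ^ 2 := by positivity
    exact mul_right_cancel₀ hP2.ne' h2
  -- main strict inequality
  set a : ℝ := Real.sqrt Real.pi with hadef
  have ha2 : a ^ 2 = Real.pi := Real.sq_sqrt Real.pi_pos.le
  have main : (x - 1) * s1 ^ 2 < a * x * s2 := by
    have h1 : s1 ^ 2 * (x - 1) < Real.pi * x := by
      have := mul_lt_mul_of_pos_right hs1sq (show (0:ℝ) < x - 1 by linarith)
      rwa [div_mul_cancel₀ _ (show (x:ℝ) - 1 ≠ 0 by intro h; linarith)] at this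
    have h2 : Real.pi * x ≤ a * x * s2 := by
      have h3 : (a * x) * a ≤ (a * x) * s2 :=
        mul_le_mul_of_nonneg_left hs2 (mul_nonneg (Real.sqrt_nonneg _) hx0.le)
      calc Real.pi * x = (a * x) * a := by rw [← ha2]; ring
        _ ≤ (a * x) * s2 := h3
        _ = a * x * s2 := by ring
    linarith
  -- now prove the goal
  have hcast : ((2 * l + 1 : ℕ) : ℝ) = 2 * x + 1 := by push_cast; ring
  rw [hcast]
  have hM1 : 2 * x + 1 - 1 = 2 * x := by ring
  rw [hM1]
  have h32 : (2 * x) ^ ((3 : ℝ) / 2) = 2 * x * Real.sqrt (2 * x) := by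
    rw [show (3 : ℝ) / 2 = 1 + 1 / 2 by norm_num, Real.rpow_add (by linarith), Real.rpow_one,
      ← Real.sqrt_eq_rpow]
  rw [h32]
  have hab : Real.sqrt (2 * Real.pi) * Real.sqrt (2 * x) = 2 * a * b := by
    rw [← Real.sqrt_mul (by positivity), show 2 * Real.pi * (2 * x) = 2 ^ 2 * (Real.pi * x) by ring,
      Real.sqrt_mul (by norm_num), Real.sqrt_sq (by norm_num : (0:ℝ) ≤ 2),
      Real.sqrt_mul Real.pi_pos.le, hadef, hbdef]
    ring
  have hpow2 : (2 : ℝ) ^ (2 * l + 1) = 2 * F := by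
    rw [hFdef, pow_succ, pow_mul]; norm_num; ring
  rw [hpow2]
  have hd1 : (0 : ℝ) < 2 * (2 * x + 1) * C := by positivity
  have hd2 : (0 : ℝ) < 2 * ((2 * x + 1) ^ 2 - 3 * (2 * x + 1)) := by
    have h : (2 * x + 1) ^ 2 - 3 * (2 * x + 1) = (2 * x + 1) * (2 * x - 2) := by ring
    rw [h]
    have : (0:ℝ) < (2 * x + 1) * (2 * x - 2) :=
      mul_pos (by linarith) (by linarith)
    linarith
  rw [div_lt_div_iff₀ hd1 hd2]
  -- multiply through by s1^2 * x > 0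
  have hs1x : (0 : ℝ) < s1 ^ 2 * x := by positivity
  refine lt_of_mul_lt_mul_right ?_ hs1x.le
  calc 2 * F * (2 * ((2 * x + 1) ^ 2 - 3 * (2 * x + 1))) * (s1 ^ 2 * x)
      = 8 * F * x * (2 * x + 1) * ((x - 1) * s1 ^ 2) := by ring
    _ < 8 * F * x * (2 * x + 1) * (a * x * s2) := by
        apply mul_lt_mul_of_pos_left main (by positivity)
    _ = Real.sqrt (2 * Real.pi) * (2 * x * Real.sqrt (2 * x)) * (2 * (2 * x + 1) * C) *
        (s1 ^ 2 * x) := by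
        have expand : Real.sqrt (2 * Real.pi) * (2 * x * Real.sqrt (2 * x)) *
            (2 * (2 * x + 1) * C) * (s1 ^ 2 * x) =
            (Real.sqrt (2 * Real.pi) * Real.sqrt (2 * x)) * (4 * x * (2 * x + 1)) *
            (C * s1 ^ 2 * x) := by ring
        rw [expand, hab, key]
        linear_combination (-8 * a * x * (2 * x + 1) * s2 * F) * hb2
  done
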